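/- Let n ≥ 2 and let c = (c_1, …, c_n) ∈ ℝ^n have positive entries arranged in descending order with c_1 = 1 and c_2 > 0, and let ‖·‖_c be the c-norm on B(H). Then two nonzero operators A, B ∈ B(H) satisfy ‖AB‖_c = ‖A‖_c · ‖B‖_c if and only if there exist nonzero vectors x, y, z ∈ H such that A = x y* and B = y z*. -/

import Mathlib

open scoped InnerProductSpace

variable {H : Type*} [NormedAddCommGroup H] [InnerProductSpace ℂ H] [CompleteSpace H]

/-- The `k`-th singular value (1-indexed) of a bounded operator `A`:
`s_k(A) = inf {‖A - X‖ : rank X < k}`. -/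
noncomputable def sval (k : ℕ) (A : H →L[ℂ] H) : ℝ :=
  sInf { r : ℝ | ∃ X : H →L[ℂ] H,
    Module.rank ℂ (LinearMap.range (X : H →ₗ[ℂ] H)) < (k : Cardinal) ∧ r = ‖A - X‖ }

/-- `f : ℝ^n → ℝ` is a symmetric norm: a norm invariant under permutations of the
coordinates and under sign changes of the coordinates. -/
structure IsSymmetricNorm (n : ℕ) (f : (Fin n → ℝ) → ℝ) : Prop where
  triangle : ∀ x y, f (x + y) ≤ f x + f y
  homog : ∀ (t : ℝ) (x), f (t • x) = |t| * f x
  definite : ∀ x, x ≠ 0 → 0 < f x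
  perm_invariant : ∀ (σ : Equiv.Perm (Fin n)) (x), f (fun i => x (σ i)) = f x
  sign_invariant : ∀ (ε : Fin n → ℝ), (∀ i, ε i = 1 ∨ ε i = -1) →
    ∀ x, f (fun i => ε i * x i) = f x

/-- The unitarily invariant norm induced by a symmetric norm `f` on `ℝ^n`:
`‖A‖_f = f (s_1(A), …, s_n(A))`. -/
noncomputable def normf (n : ℕ) (f : (Fin n → ℝ) → ℝ) (A : H →L[ℂ] H) : ℝ :=
  f (fun j : Fin n => sval (j.1 + 1) A)

/-- The `c`-norm `‖A‖_c = Σ_j c_j s_j(A)`. -/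
noncomputable def cnorm (n : ℕ) (c : Fin n → ℝ) (A : H →L[ℂ] H) : ℝ :=
  ∑ j : Fin n, c j * sval (j.1 + 1) A

/-- The rank-one operator `x y* : z ↦ ⟨z, y⟩ x` (inner product linear in `z`). -/
noncomputable def rankOne (x y : H) : H →L[ℂ] H :=
  (innerSL ℂ y).smulRight x

set_option linter.unusedSectionVars false

set_option maxHeartbeats 1000000

lemma svalSet_bddBelow (k : ℕ) (A : H →L[ℂ] H) :
    BddBelow { r : ℝ | ∃ X : H →L[ℂ] H,
      Module.rank ℂ (LinearMap.range (X : H →ₗ[ℂ] H)) < (k : Cardinal) ∧ r = ‖A - X‖ } :=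
  ⟨0, by rintro r ⟨X, -, rfl⟩; exact norm_nonneg _⟩

lemma sval_nonneg (k : ℕ) (A : H →L[ℂ] H) : 0 ≤ sval k A :=
  Real.sInf_nonneg (by rintro r ⟨X, -, rfl⟩; exact norm_nonneg _)

lemma rank_zero_lt {k : ℕ} (hk : 1 ≤ k) :
    Module.rank ℂ (LinearMap.range ((0 : H →L[ℂ] H) : H →ₗ[ℂ] H)) < (k : Cardinal) := by
  have : LinearMap.range ((0 : H →L[ℂ] H) : H →ₗ[ℂ] H) = ⊥ := by
    simp
  rw [this, rank_bot]
  exact_mod_cast Nat.pos_of_ne_zero (by omega)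

lemma svalSet_nonempty {k : ℕ} (hk : 1 ≤ k) (A : H →L[ℂ] H) :
    Set.Nonempty { r : ℝ | ∃ X : H →L[ℂ] H,
      Module.rank ℂ (LinearMap.range (X : H →ₗ[ℂ] H)) < (k : Cardinal) ∧ r = ‖A - X‖ } :=
  ⟨‖A - 0‖, ⟨0, rank_zero_lt hk, rfl⟩⟩

lemma sval_le {k : ℕ} (A X : H →L[ℂ] H)
    (h : Module.rank ℂ (LinearMap.range (X : H →ₗ[ℂ] H)) < (k : Cardinal)) :
    sval k A ≤ ‖A - X‖ :=
  csInf_le (svalSet_bddBelow k A) ⟨X, h, rfl⟩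

lemma sval_eq_zero {k : ℕ} (A : H →L[ℂ] H)
    (h : Module.rank ℂ (LinearMap.range (A : H →ₗ[ℂ] H)) < (k : Cardinal)) :
    sval k A = 0 :=
  le_antisymm (by simpa using sval_le A A h) (sval_nonneg k A)

lemma sval_one (A : H →L[ℂ] H) : sval 1 A = ‖A‖ := by
  have hset : { r : ℝ | ∃ X : H →L[ℂ] H,
      Module.rank ℂ (LinearMap.range (X : H →ₗ[ℂ] H)) < ((1 : ℕ) : Cardinal) ∧ r = ‖A - X‖ }
      = {‖A‖} := by
    ext r
    simp only [Set.mem_setOf_eq, Set.mem_singleton_iff]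
    constructor
    · rintro ⟨X, hX, rfl⟩
      have h0 : Module.rank ℂ (LinearMap.range (X : H →ₗ[ℂ] H)) = 0 :=
        Cardinal.lt_one_iff_zero.mp (by exact_mod_cast hX)
      have : LinearMap.range (X : H →ₗ[ℂ] H) = ⊥ := Submodule.rank_eq_zero.mp h0
      have hX0 : X = 0 := by
        ext w
        have := LinearMap.range_eq_bot.mp this
        exact congrFun (congrArg DFunLike.coe this) w
      rw [hX0, sub_zero]
    · rintro rfl
      exact ⟨0, rank_zero_lt le_rfl, by rw [sub_zero]⟩
  rw [sval, hset, csInf_singleton]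

set_option linter.unusedSectionVars false

lemma rankOne_apply (x y w : H) : rankOne x y w = ⟪y, w⟫_ℂ • x := rfl

lemma norm_rankOne (x y : H) : ‖rankOne x y‖ = ‖x‖ * ‖y‖ := by
  rw [rankOne, ContinuousLinearMap.norm_smulRight_apply, innerSL_apply_norm, mul_comm]

lemma rank_rankOne_le (x y : H) :
    Module.rank ℂ (LinearMap.range ((rankOne x y : H →L[ℂ] H) : H →ₗ[ℂ] H)) ≤ 1 := by
  have hle : LinearMap.range ((rankOne x y : H →L[ℂ] H) : H →ₗ[ℂ] H) ≤ Submodule.span ℂ {x} := by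
    rintro - ⟨w, rfl⟩
    exact Submodule.mem_span_singleton.mpr ⟨⟪y, w⟫_ℂ, rfl⟩
  calc Module.rank ℂ (LinearMap.range ((rankOne x y : H →L[ℂ] H) : H →ₗ[ℂ] H))
      ≤ Module.rank ℂ (Submodule.span ℂ ({x} : Set H)) := Submodule.rank_mono hle
    _ ≤ Cardinal.mk ({x} : Set H) := rank_span_le _
    _ = 1 := Cardinal.mk_singleton x

lemma rankOne_comp_rankOne (x y u z : H) :
    rankOne x y ∘L rankOne u z = rankOne (⟪y, u⟫_ℂ • x) z := by
  ext w
  simp only [ContinuousLinearMap.comp_apply, rankOne_apply, inner_smul_right, smul_smul]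

lemma rankOne_smul_left (r : ℂ) (y z : H) :
    rankOne (r • y) z = rankOne y ((starRingEnd ℂ) r • z) := by
  ext w
  simp only [rankOne_apply, inner_smul_left, smul_smul, RingHom.id_apply, starRingEnd_self_apply,
    mul_comm]

lemma sval_comp_left {k : ℕ} (hk : 1 ≤ k) (A B : H →L[ℂ] H) :
    sval k (A ∘L B) ≤ ‖A‖ * sval k B := by
  rcases eq_or_ne A 0 with rfl | hA
  · rw [ContinuousLinearMap.zero_comp, sval_eq_zero _ (rank_zero_lt hk)]
    exact mul_nonneg (norm_nonneg _) (sval_nonneg _ _)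
  · have hApos : (0:ℝ) < ‖A‖ := norm_pos_iff.mpr hA
    have key : ∀ r ∈ { r : ℝ | ∃ X : H →L[ℂ] H,
        Module.rank ℂ (LinearMap.range (X : H →ₗ[ℂ] H)) < (k : Cardinal) ∧ r = ‖B - X‖ },
        sval k (A ∘L B) / ‖A‖ ≤ r := by
      rintro - ⟨X, hX, rfl⟩
      rw [div_le_iff₀ hApos, mul_comm]
      have hAX : Module.rank ℂ (LinearMap.range ((A ∘L X : H →L[ℂ] H) : H →ₗ[ℂ] H))
          < (k : Cardinal) := by
        have : LinearMap.range ((A ∘L X : H →L[ℂ] H) : H →ₗ[ℂ] H)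
            = (LinearMap.range (X : H →ₗ[ℂ] H)).map (A : H →ₗ[ℂ] H) := by
          exact LinearMap.range_comp (X : H →ₗ[ℂ] H) (A : H →ₗ[ℂ] H)
        rw [this]
        exact lt_of_le_of_lt (rank_map_le _ _) hX
      calc sval k (A ∘L B) ≤ ‖A ∘L B - A ∘L X‖ := sval_le _ _ hAX
        _ = ‖A ∘L (B - X)‖ := by rw [ContinuousLinearMap.comp_sub]
        _ ≤ ‖A‖ * ‖B - X‖ := ContinuousLinearMap.opNorm_comp_le _ _
    have := le_csInf (svalSet_nonempty hk B) key
    rw [div_le_iff₀ hApos] at this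
    rw [mul_comm] at this
    exact this.trans_eq rfl

lemma sval_comp_right {k : ℕ} (hk : 1 ≤ k) (A B : H →L[ℂ] H) :
    sval k (A ∘L B) ≤ sval k A * ‖B‖ := by
  rcases eq_or_ne B 0 with rfl | hB
  · rw [ContinuousLinearMap.comp_zero, sval_eq_zero _ (rank_zero_lt hk)]
    exact mul_nonneg (sval_nonneg _ _) (norm_nonneg _)
  · have hBpos : (0:ℝ) < ‖B‖ := norm_pos_iff.mpr hB
    have key : ∀ r ∈ { r : ℝ | ∃ X : H →L[ℂ] H,
        Module.rank ℂ (LinearMap.range (X : H →ₗ[ℂ] H)) < (k : Cardinal) ∧ r = ‖A - X‖ },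
        sval k (A ∘L B) / ‖B‖ ≤ r := by
      rintro - ⟨X, hX, rfl⟩
      rw [div_le_iff₀ hBpos]
      have hXB : Module.rank ℂ (LinearMap.range ((X ∘L B : H →L[ℂ] H) : H →ₗ[ℂ] H))
          < (k : Cardinal) := by
        have hle : LinearMap.range ((X ∘L B : H →L[ℂ] H) : H →ₗ[ℂ] H)
            ≤ LinearMap.range (X : H →ₗ[ℂ] H) := by
          rintro - ⟨w, rfl⟩; exact ⟨B w, rfl⟩
        exact lt_of_le_of_lt (Submodule.rank_mono hle) hX
      calc sval k (A ∘L B) ≤ ‖A ∘L B - X ∘L B‖ := sval_le _ _ hXB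
        _ = ‖(A - X) ∘L B‖ := by rw [ContinuousLinearMap.sub_comp]
        _ ≤ ‖A - X‖ * ‖B‖ := ContinuousLinearMap.opNorm_comp_le _ _
    have := le_csInf (svalSet_nonempty hk A) key
    rw [div_le_iff₀ hBpos] at this
    exact this

lemma minor_eq_zero_of_rank_le_one (X : H →L[ℂ] H)
    (hX : Module.rank ℂ (LinearMap.range (X : H →ₗ[ℂ] H)) ≤ 1) (a b v w : H) :
    ⟪a, X v⟫_ℂ * ⟪b, X w⟫_ℂ = ⟪a, X w⟫_ℂ * ⟪b, X v⟫_ℂ := by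
  obtain ⟨v₀, hv₀⟩ := rank_le_one_iff.mp hX
  obtain ⟨r, hr⟩ := hv₀ ⟨X v, LinearMap.mem_range_self _ v⟩
  obtain ⟨s, hs⟩ := hv₀ ⟨X w, LinearMap.mem_range_self _ w⟩
  have hrv : X v = r • (v₀ : H) := by
    have := congrArg (Subtype.val) hr; simpa using this.symm
  have hsw : X w = s • (v₀ : H) := by
    have := congrArg (Subtype.val) hs; simpa using this.symm
  rw [hrv, hsw]
  simp only [inner_smul_right]
  ring

lemma rank_le_one_of_minors (A : H →L[ℂ] H)
    (hmin : ∀ a b v w : H, ⟪a, A v⟫_ℂ * ⟪b, A w⟫_ℂ = ⟪a, A w⟫_ℂ * ⟪b, A v⟫_ℂ) :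
    Module.rank ℂ (LinearMap.range (A : H →ₗ[ℂ] H)) ≤ 1 := by
  rcases eq_or_ne A 0 with rfl | hA
  · rw [show LinearMap.range ((0 : H →L[ℂ] H) : H →ₗ[ℂ] H) = ⊥ by simp, rank_bot]
    exact zero_le_one
  · obtain ⟨v₀, hv₀⟩ : ∃ v₀, A v₀ ≠ 0 := by
      by_contra hcon
      push_neg at hcon
      exact hA (ContinuousLinearMap.ext fun w => by simp [hcon w])
    set x₀ := A v₀ with hx₀
    have hspan : ∀ w : H, ∃ t : ℂ, A w = t • x₀ := by
      intro w
      have key : ∀ b : H, ⟪b, ⟪x₀, x₀⟫_ℂ • A w - ⟪x₀, A w⟫_ℂ • x₀⟫_ℂ = 0 := by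
        intro b
        have := hmin x₀ b v₀ w
        rw [inner_sub_right, inner_smul_right, inner_smul_right]
        rw [← hx₀] at this
        rw [mul_comm (⟪x₀, A w⟫_ℂ) (⟪b, x₀⟫_ℂ)] at this
        rw [this]
        ring
      have hzero : ⟪x₀, x₀⟫_ℂ • A w - ⟪x₀, A w⟫_ℂ • x₀ = 0 :=
        inner_self_eq_zero.mp (key _)
      have hxx : ⟪x₀, x₀⟫_ℂ ≠ 0 := inner_self_ne_zero.mpr hv₀
      refine ⟨(⟪x₀, x₀⟫_ℂ)⁻¹ * ⟪x₀, A w⟫_ℂ, ?_⟩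
      have := sub_eq_zero.mp hzero
      rw [mul_smul]
      rw [← this, smul_smul, inv_mul_cancel₀ hxx, one_smul]
    have hle : LinearMap.range (A : H →ₗ[ℂ] H) ≤ Submodule.span ℂ {x₀} := by
      rintro - ⟨w, rfl⟩
      obtain ⟨t, ht⟩ := hspan w
      exact Submodule.mem_span_singleton.mpr ⟨t, ht.symm⟩
    calc Module.rank ℂ (LinearMap.range (A : H →ₗ[ℂ] H))
        ≤ Module.rank ℂ (Submodule.span ℂ ({x₀} : Set H)) := Submodule.rank_mono hle
      _ ≤ Cardinal.mk ({x₀} : Set H) := rank_span_le _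
      _ = 1 := Cardinal.mk_singleton x₀

lemma rank_le_one_of_sval_two (A : H →L[ℂ] H) (h : sval 2 A = 0) :
    Module.rank ℂ (LinearMap.range (A : H →ₗ[ℂ] H)) ≤ 1 := by
  have hclos : A ∈ closure {X : H →L[ℂ] H |
      Module.rank ℂ (LinearMap.range (X : H →ₗ[ℂ] H)) ≤ 1} := by
    rw [Metric.mem_closure_iff]
    intro ε hε
    have hlt : sInf { r : ℝ | ∃ X : H →L[ℂ] H,
        Module.rank ℂ (LinearMap.range (X : H →ₗ[ℂ] H)) < ((2:ℕ) : Cardinal) ∧ r = ‖A - X‖ }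
        < ε := by rw [← sval]; rw [h]; exact hε
    obtain ⟨r, ⟨X, hX, rfl⟩, hrε⟩ :=
      exists_lt_of_csInf_lt (svalSet_nonempty (by norm_num) A) hlt
    refine ⟨X, ?_, ?_⟩
    · have : ((2:ℕ) : Cardinal) = Order.succ ((1:ℕ) : Cardinal) := Cardinal.nat_succ 1
      rw [this] at hX
      simpa using Order.lt_succ_iff.mp hX
    · rw [dist_eq_norm]; exact hrε
  apply rank_le_one_of_minors
  intro a b v w
  have hC : IsClosed {T : H →L[ℂ] H |
      ⟪a, T v⟫_ℂ * ⟪b, T w⟫_ℂ - ⟪a, T w⟫_ℂ * ⟪b, T v⟫_ℂ = 0} := by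
    apply isClosed_eq _ continuous_const
    have happ : ∀ u : H, Continuous fun T : H →L[ℂ] H => T u := fun u =>
      (ContinuousLinearMap.apply ℂ H u).continuous
    exact ((continuous_const.inner (happ v)).mul (continuous_const.inner (happ w))).sub
      ((continuous_const.inner (happ w)).mul (continuous_const.inner (happ v)))
  have hsub : {X : H →L[ℂ] H |
      Module.rank ℂ (LinearMap.range (X : H →ₗ[ℂ] H)) ≤ 1} ⊆ {T : H →L[ℂ] H |
      ⟪a, T v⟫_ℂ * ⟪b, T w⟫_ℂ - ⟪a, T w⟫_ℂ * ⟪b, T v⟫_ℂ = 0} := by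
    intro X hX
    exact sub_eq_zero.mpr (minor_eq_zero_of_rank_le_one X hX a b v w)
  exact sub_eq_zero.mp (closure_minimal hsub hC hclos)

lemma rankOne_decomp (A : H →L[ℂ] H) (hA : A ≠ 0)
    (h1 : Module.rank ℂ (LinearMap.range (A : H →ₗ[ℂ] H)) ≤ 1) :
    ∃ x y : H, x ≠ 0 ∧ y ≠ 0 ∧ A = rankOne x y := by
  obtain ⟨v₀, hv₀⟩ : ∃ v₀, A v₀ ≠ 0 := by
    by_contra hcon
    push_neg at hcon
    exact hA (ContinuousLinearMap.ext fun w => by simp [hcon w])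
  set x := A v₀ with hx
  obtain ⟨w₀, hw₀⟩ := rank_le_one_iff.mp h1
  have hspan : ∀ w : H, ∃ t : ℂ, A w = t • x := by
    intro w
    obtain ⟨r, hr⟩ := hw₀ ⟨A w, LinearMap.mem_range_self _ w⟩
    obtain ⟨s, hs⟩ := hw₀ ⟨A v₀, LinearMap.mem_range_self _ v₀⟩
    have hrw : A w = r • (w₀ : H) := by
      have := congrArg Subtype.val hr; simpa using this.symm
    have hsv : x = s • (w₀ : H) := by
      have := congrArg Subtype.val hs; simpa using this.symm
    have hs0 : s ≠ 0 := by
      intro h0; apply hv₀; rw [hsv, h0, zero_smul]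
    refine ⟨r / s, ?_⟩
    rw [hrw, hsv, smul_smul, div_mul_cancel₀ _ hs0]
  set y := (starRingEnd ℂ) ((⟪x, x⟫_ℂ)⁻¹) • (ContinuousLinearMap.adjoint A) x with hy
  have hAeq : A = rankOne x y := by
    ext w
    obtain ⟨t, ht⟩ := hspan w
    have hxx : ⟪x, x⟫_ℂ ≠ 0 := inner_self_ne_zero.mpr hv₀
    rw [rankOne_apply, hy, inner_smul_left, starRingEnd_self_apply,
      ContinuousLinearMap.adjoint_inner_left, ht, inner_smul_right]
    rw [← mul_assoc, mul_comm _ t, mul_assoc, inv_mul_cancel₀ hxx, mul_one]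
  refine ⟨x, y, hv₀, ?_, hAeq⟩
  intro hy0
  apply hA
  rw [hAeq, hy0]
  ext w
  simp [rankOne_apply]

lemma cnorm_rankOne (n : ℕ) (hn : 0 < n) (c : Fin n → ℝ) (hc1 : c ⟨0, hn⟩ = 1) (x y : H) :
    cnorm n c (rankOne x y) = ‖x‖ * ‖y‖ := by
  rw [cnorm, Finset.sum_eq_single_of_mem ⟨0, hn⟩ (Finset.mem_univ _)]
  · rw [hc1, one_mul]
    show sval 1 (rankOne x y) = _
    rw [sval_one, norm_rankOne]
  · intro j _ hj
    have hj1 : 1 ≤ j.1 := by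
      by_contra hlt
      push_neg at hlt
      exact hj (Fin.ext (show j.1 = 0 by omega))
    have hz : sval (j.1 + 1) (rankOne x y) = 0 := by
      apply sval_eq_zero
      exact lt_of_le_of_lt (rank_rankOne_le x y) (by exact_mod_cast (by omega : 1 < j.1 + 1))
    rw [hz, mul_zero]

lemma norm_le_cnorm (n : ℕ) (hn : 0 < n) (c : Fin n → ℝ) (hc1 : c ⟨0, hn⟩ = 1)
    (hpos : ∀ i, 0 ≤ c i) (T : H →L[ℂ] H) : ‖T‖ ≤ cnorm n c T := by
  have h0 : c ⟨0, hn⟩ * sval ((0:ℕ) + 1) T ≤ cnorm n c T :=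
    Finset.single_le_sum (f := fun j : Fin n => c j * sval (j.1 + 1) T)
      (fun j _ => mul_nonneg (hpos j) (sval_nonneg _ _)) (Finset.mem_univ (⟨0, hn⟩ : Fin n))
  rwa [hc1, one_mul, sval_one] at h0

theorem stmt14 (n : ℕ) (hn : 2 ≤ n) (hdim : (n : Cardinal) ≤ Module.rank ℂ H)
    (c : Fin n → ℝ) (hmono : ∀ i j : Fin n, i ≤ j → c j ≤ c i) (hpos : ∀ i, 0 < c i)
    (hc1 : c ⟨0, by omega⟩ = 1) (hc2 : 0 < c ⟨1, by omega⟩) :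
    ∀ A B : H →L[ℂ] H, A ≠ 0 → B ≠ 0 →
      (cnorm n c (A ∘L B) = cnorm n c A * cnorm n c B ↔
        ∃ x y z : H, x ≠ 0 ∧ y ≠ 0 ∧ z ≠ 0 ∧ A = rankOne x y ∧ B = rankOne y z) := by
  intro A B hA hB
  have hn0 : 0 < n := by omega
  have hc1' : c ⟨0, hn0⟩ = 1 := hc1
  have hApos : (0:ℝ) < ‖A‖ := norm_pos_iff.mpr hA
  have hBpos : (0:ℝ) < ‖B‖ := norm_pos_iff.mpr hB
  have hcA : 0 < cnorm n c A := lt_of_lt_of_le hApos (norm_le_cnorm n hn0 c hc1' (fun i => (hpos i).le) A)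
  have hcB : 0 < cnorm n c B := lt_of_lt_of_le hBpos (norm_le_cnorm n hn0 c hc1' (fun i => (hpos i).le) B)
  constructor
  · intro h
    have hub1 : cnorm n c (A ∘L B) ≤ ‖A‖ * cnorm n c B := by
      rw [cnorm, cnorm, Finset.mul_sum]
      refine Finset.sum_le_sum fun j _ => ?_
      calc c j * sval (j.1 + 1) (A ∘L B) ≤ c j * (‖A‖ * sval (j.1 + 1) B) :=
            mul_le_mul_of_nonneg_left (sval_comp_left (by omega) A B) (hpos j).le
        _ = ‖A‖ * (c j * sval (j.1 + 1) B) := by ring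
    have hub2 : cnorm n c (A ∘L B) ≤ cnorm n c A * ‖B‖ := by
      rw [cnorm, cnorm, Finset.sum_mul]
      refine Finset.sum_le_sum fun j _ => ?_
      calc c j * sval (j.1 + 1) (A ∘L B) ≤ c j * (sval (j.1 + 1) A * ‖B‖) :=
            mul_le_mul_of_nonneg_left (sval_comp_right (by omega) A B) (hpos j).le
        _ = c j * sval (j.1 + 1) A * ‖B‖ := by ring
    have heqA : cnorm n c A = ‖A‖ := by
      have h1 : cnorm n c A * cnorm n c B ≤ ‖A‖ * cnorm n c B := h ▸ hub1
      exact le_antisymm (le_of_mul_le_mul_right h1 hcB)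
        (norm_le_cnorm n hn0 c hc1' (fun i => (hpos i).le) A)
    have heqB : cnorm n c B = ‖B‖ := by
      have h1 : cnorm n c A * cnorm n c B ≤ cnorm n c A * ‖B‖ := h ▸ hub2
      exact le_antisymm (le_of_mul_le_mul_left h1 hcA)
        (norm_le_cnorm n hn0 c hc1' (fun i => (hpos i).le) B)
    have key : ∀ T : H →L[ℂ] H, cnorm n c T = ‖T‖ → sval 2 T = 0 := by
      intro T hT
      have hsum : ∑ j ∈ Finset.univ.erase ⟨0, hn0⟩, c j * sval (j.1 + 1) T = 0 := by
        have hsplit := Finset.add_sum_erase Finset.univ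
          (fun j : Fin n => c j * sval (j.1 + 1) T) (Finset.mem_univ ⟨0, hn0⟩)
        have hterm : c ⟨0, hn0⟩ * sval ((⟨0, hn0⟩ : Fin n).1 + 1) T = ‖T‖ := by
          rw [hc1', one_mul]
          exact sval_one T
        have h2 : c ⟨0, hn0⟩ * sval (0 + 1) T
            + ∑ j ∈ Finset.univ.erase ⟨0, hn0⟩, c j * sval (j.1 + 1) T = cnorm n c T := hsplit
        rw [hT, hc1', one_mul, show (0 + 1 : ℕ) = 1 from rfl, sval_one] at h2
        linarith
      have hmem : (⟨1, by omega⟩ : Fin n) ∈ Finset.univ.erase ⟨0, hn0⟩ :=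
        Finset.mem_erase.mpr ⟨by simp [Fin.ext_iff], Finset.mem_univ _⟩
      have hterm0 := (Finset.sum_eq_zero_iff_of_nonneg
        (fun j _ => mul_nonneg (hpos j).le (sval_nonneg _ _))).mp hsum _ hmem
      have := (mul_eq_zero.mp hterm0).resolve_left (ne_of_gt (hpos ⟨1, by omega⟩))
      simpa using this
    obtain ⟨x, y, hx, hy, hAxy⟩ := rankOne_decomp A hA (rank_le_one_of_sval_two A (key A heqA))
    obtain ⟨u, z, hu, hz, hBuz⟩ := rankOne_decomp B hB (rank_le_one_of_sval_two B (key B heqB))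
    rw [hAxy, hBuz, rankOne_comp_rankOne, cnorm_rankOne n hn0 c hc1', cnorm_rankOne n hn0 c hc1',
      cnorm_rankOne n hn0 c hc1', norm_smul] at h
    have hxpos : (0:ℝ) < ‖x‖ := norm_pos_iff.mpr hx
    have hzpos : (0:ℝ) < ‖z‖ := norm_pos_iff.mpr hz
    have hcs : ‖⟪y, u⟫_ℂ‖ = ‖y‖ * ‖u‖ := by
      have h' : ‖⟪y, u⟫_ℂ‖ * (‖x‖ * ‖z‖) = ‖y‖ * ‖u‖ * (‖x‖ * ‖z‖) := by
        rw [mul_comm (‖x‖) (‖y‖)] at h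
        nlinarith [h]
      exact mul_right_cancel₀ (by positivity) h'
    obtain ⟨r, hr0, hru⟩ := (norm_inner_eq_norm_iff hy hu).mp hcs
    refine ⟨x, y, (starRingEnd ℂ) r • z, hx, hy,
      smul_ne_zero (by simpa using hr0) hz, hAxy, ?_⟩
    rw [hBuz, hru, rankOne_smul_left]
  · rintro ⟨x, y, z, hx, hy, hz, rfl, rfl⟩
    rw [rankOne_comp_rankOne, cnorm_rankOne n hn0 c hc1', cnorm_rankOne n hn0 c hc1',
      cnorm_rankOne n hn0 c hc1', norm_smul]
    have hyy : ‖⟪y, y⟫_ℂ‖ = ‖y‖ * ‖y‖ := by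
      rw [@inner_self_eq_norm_sq_to_K ℂ]
      simp [sq]
    rw [hyy]
    ring
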